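/- Define f : ℕ → ℚ by f(0) = 1, f(1) = -1, and for n = 2^a + b with 1 ≤ b < 2^a (a ≥ 1): f(n) = 3·f(b) if 2b < 2^a, and f(n) = f(b)/3 otherwise. Then for every n with binary expansion n = Σ_i ν_i 2^i, f(n) = (-1)^n · Π_{i≥0} 3^{(1−2ν_i)·ν_{i+1}}. -/

import Mathlib

/-- `f(0)=1`, `f(1)=-1`, and for `n = 2^a + b ≥ 2` with `0 ≤ b < 2^a`:
`f(n) = 3 f(b)` if `2b < 2^a`, and `f(n) = f(b)/3` otherwise. -/
def beebF : ℕ → ℚ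
  | 0 => 1
  | 1 => -1
  | (n + 2) =>
      if 2 * ((n + 2) - 2 ^ Nat.log2 (n + 2)) < 2 ^ Nat.log2 (n + 2) then
        3 * beebF ((n + 2) - 2 ^ Nat.log2 (n + 2))
      else
        beebF ((n + 2) - 2 ^ Nat.log2 (n + 2)) / 3
decreasing_by
  all_goals
    have h2 : 2 ≤ 2 ^ Nat.log2 (n + 2) := by
      have : (1:ℕ) ≤ Nat.log2 (n + 2) := by
        rw [Nat.le_log2 (by omega)]; omega
      calc (2:ℕ) = 2 ^ 1 := by norm_num
      _ ≤ 2 ^ Nat.log2 (n + 2) := Nat.pow_le_pow_right (by norm_num) this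
  all_goals omega

/-- `i`-th binary digit of `n`, as an integer. -/
def bit' (n i : ℕ) : ℤ := if n.testBit i then 1 else 0

lemma bit'_eq_zero {n i : ℕ} (h : n < 2 ^ i) : bit' n i = 0 := by
  simp [bit', Nat.testBit_lt_two_pow h]

lemma prod_stab (x m k : ℕ) (hm : x < 2 ^ (m + 1)) (hmk : m ≤ k) :
    ∏ i ∈ Finset.range k, (3 : ℚ) ^ (((1 - 2 * bit' x i) * bit' x (i + 1)) : ℤ)
      = ∏ i ∈ Finset.range m, (3 : ℚ) ^ (((1 - 2 * bit' x i) * bit' x (i + 1)) : ℤ) := by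
  symm
  apply Finset.prod_subset (Finset.range_subset_range.2 hmk)
  intro i hi hnot
  simp only [Finset.mem_range] at hi hnot
  have hx : x < 2 ^ (i + 1) :=
    lt_of_lt_of_le hm (Nat.pow_le_pow_right (by norm_num) (by omega))
  rw [bit'_eq_zero hx]
  simp

lemma prod_stab' (x m k : ℕ) (hm : x < 2 ^ (m + 1)) (hk : x < 2 ^ (k + 1)) :
    ∏ i ∈ Finset.range m, (3 : ℚ) ^ (((1 - 2 * bit' x i) * bit' x (i + 1)) : ℤ)
      = ∏ i ∈ Finset.range k, (3 : ℚ) ^ (((1 - 2 * bit' x i) * bit' x (i + 1)) : ℤ) := by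
  rcases le_total m k with h | h
  · exact (prod_stab x m k hm h).symm
  · exact prod_stab x k m hk h

theorem beebF_closed_form (n : ℕ) :
    beebF n = (-1) ^ n *
      ∏ i ∈ Finset.range n, (3 : ℚ) ^ (((1 - 2 * bit' n i) * bit' n (i + 1)) : ℤ) := by
  induction n using Nat.strong_induction_on with
  | _ n ih =>
  match n with
  | 0 => simp [beebF]
  | 1 =>
      have h0 : bit' 1 1 = 0 := by decide
      simp [beebF, h0]
  | (m + 2) =>
    set N := m + 2 with hN
    have hN2 : 2 ≤ N := by omega
    set a := Nat.log2 N with ha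
    have h2a : 2 ^ a ≤ N := Nat.log2_self_le (by omega)
    have h2a' : N < 2 ^ (a + 1) := Nat.lt_log2_self
    have ha1 : 1 ≤ a := by
      rw [ha, Nat.le_log2 (by omega)]; omega
    set b := N - 2 ^ a with hb
    have hbN : N = 2 ^ a + b := by omega
    have hblt : b < 2 ^ a := by
      have : 2 ^ (a + 1) = 2 ^ a + 2 ^ a := by ring
      omega
    have hbmod : b = N % 2 ^ a := by
      rw [Nat.mod_eq_sub_mod h2a, Nat.mod_eq_of_lt (by omega)]
    -- bits of N below a agree with bits of b
    have hbit_lt : ∀ i, i < a → N.testBit i = b.testBit i := by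
      intro i hi
      rw [hbmod, Nat.testBit_mod_two_pow]
      simp [hi]
    have hbit'_lt : ∀ i, i < a → bit' N i = bit' b i := by
      intro i hi; simp [bit', hbit_lt i hi]
    -- bit a of N is 1
    have hdiv : N / 2 ^ a = 1 := by
      have h1 : 1 ≤ N / 2 ^ a := (Nat.one_le_div_iff (pow_pos (by norm_num) a)).2 h2a
      have h2 : N / 2 ^ a < 2 := by
        rw [Nat.div_lt_iff_lt_mul (pow_pos (by norm_num) a)]
        have : 2 ^ (a + 1) = 2 ^ a * 2 := by ring
        omega
      omega
    have hbita : bit' N a = 1 := by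
      simp [bit', Nat.testBit_eq_decide_div_mod_eq, hdiv]
    -- condition equivalence
    have hpow : 2 ^ a = 2 * 2 ^ (a - 1) := by
      rw [← pow_succ']
      congr 1
    have hcond : b.testBit (a - 1) = true ↔ ¬ (2 * b < 2 ^ a) := by
      rw [Nat.testBit_eq_decide_div_mod_eq]
      have hpos : 0 < 2 ^ (a - 1) := pow_pos (by norm_num) _
      have hble : b / 2 ^ (a - 1) < 2 := by
        rw [Nat.div_lt_iff_lt_mul hpos]; omega
      rcases Nat.lt_or_ge b (2 ^ (a - 1)) with h | h
      · have : b / 2 ^ (a - 1) = 0 := Nat.div_eq_of_lt h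
        simp [this]; omega
      · have h1 : 1 ≤ b / 2 ^ (a - 1) := (Nat.one_le_div_iff hpos).2 h
        have : b / 2 ^ (a - 1) = 1 := by omega
        simp [this]; omega
    -- product manipulation
    have key : ∏ i ∈ Finset.range N, (3 : ℚ) ^ (((1 - 2 * bit' N i) * bit' N (i + 1)) : ℤ)
        = (∏ i ∈ Finset.range b, (3 : ℚ) ^ (((1 - 2 * bit' b i) * bit' b (i + 1)) : ℤ))
          * (3 : ℚ) ^ ((1 - 2 * bit' b (a - 1)) : ℤ) := by
      have e1 : ∏ i ∈ Finset.range N, (3 : ℚ) ^ (((1 - 2 * bit' N i) * bit' N (i + 1)) : ℤ)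
          = ∏ i ∈ Finset.range a, (3 : ℚ) ^ (((1 - 2 * bit' N i) * bit' N (i + 1)) : ℤ) :=
        prod_stab' N N a ((Nat.lt_two_pow_self (n := N)) |>.trans_le
          (Nat.pow_le_pow_right (by norm_num) (by omega))) h2a'
      rw [e1]
      have haeq : a = (a - 1) + 1 := by omega
      rw [haeq, Finset.prod_range_succ, ← haeq]
      have e2 : ∀ i ∈ Finset.range (a - 1),
          (3 : ℚ) ^ (((1 - 2 * bit' N i) * bit' N (i + 1)) : ℤ)
            = (3 : ℚ) ^ (((1 - 2 * bit' b i) * bit' b (i + 1)) : ℤ) := by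
        intro i hi
        simp only [Finset.mem_range] at hi
        rw [hbit'_lt i (by omega), hbit'_lt (i + 1) (by omega)]
      rw [Finset.prod_congr rfl e2]
      have e3 : (3 : ℚ) ^ (((1 - 2 * bit' N (a - 1)) * bit' N a) : ℤ)
          = (3 : ℚ) ^ ((1 - 2 * bit' b (a - 1)) : ℤ) := by
        rw [hbita, hbit'_lt (a - 1) (by omega), mul_one]
      rw [e3]
      congr 1
      exact (prod_stab' b b (a - 1)
        ((Nat.lt_two_pow_self (n := b)).trans_le (Nat.pow_le_pow_right (by norm_num) (by omega)))
        (by rw [← haeq]; exact hblt)).symm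
    -- sign
    have hsign : ((-1 : ℚ)) ^ N = (-1 : ℚ) ^ b := by
      rw [hbN, pow_add]
      have : Even (2 ^ a) := by
        rw [hpow]; exact even_two_mul _
      rw [this.neg_one_pow, one_mul]
    -- unfold beebF
    have hblt' : b < N := by omega
    have ihb := ih b hblt'
    rw [show (beebF N = _) from beebF.eq_3 m]
    rw [key, hsign]
    rw [← ha, ← hb] at *
    by_cases hc : 2 * b < 2 ^ a
    · have hbitb : bit' b (a - 1) = 0 := by
        simp only [bit']
        have : ¬ b.testBit (a - 1) = true := by rw [hcond]; simpa using hc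
        simp [this]
      rw [if_pos hc, ihb, hbitb]
      norm_num
      ring
    · have hbitb : bit' b (a - 1) = 1 := by
        simp only [bit']
        rw [hcond.2 hc]; simp
      rw [if_neg hc, ihb, hbitb]
      have : ((1 : ℤ) - 2 * 1) = -1 := by ring
      rw [this, zpow_neg_one]
      field_simp
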